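/- arXiv:1605.08640 — 2 statements merged into one kernel-verified Lean document; each statement's English description precedes it below -/
import Mathlib

section
/- Let (S,+,□,∂) be a monotonic arithmetical semiring satisfying S(n) ∼ S⁺(n) (axiom G₁⁺, i.e. S(n) − S⁺(n) = o(S⁺(n))), with S⁺(n) > 0 for large n. Then S⁺(n) ∼ S□(n), i.e. S⁺(n) − S□(n) = o(S⁺(n)). -/
open Asymptotics Filter

/-- Number of elements of degree `n`. -/
noncomputable def cntAll {S : Type*} (deg : S → ℕ) (n : ℕ) : ℕ :=
  Nat.card {x : S // deg x = n}

/-- Number of elements of degree `n` lying in the set `P`. -/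
noncomputable def cntIn {S : Type*} (deg : S → ℕ) (P : Set S) (n : ℕ) : ℕ :=
  Nat.card {x : S // deg x = n ∧ x ∈ P}

lemma single_pair_eq {α : Type*} {a b c d : α}
    (h : (Finsupp.single a 1 + Finsupp.single b 1 : α →₀ ℕ) = Finsupp.single c 1 + Finsupp.single d 1) :
    (a = c ∧ b = d) ∨ (a = d ∧ b = c) := by
  classical
  by_cases hac : a = c
  · subst hac
    have hb := DFunLike.congr_fun h b
    simp only [Finsupp.add_apply, Finsupp.single_apply, eq_self_iff_true, if_true] at hb
    left
    refine ⟨rfl, ?_⟩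
    by_cases hdb : d = b
    · exact hdb.symm
    · exfalso
      rw [if_neg hdb] at hb
      by_cases hab : a = b <;> simp [hab] at hb
  · have ha := DFunLike.congr_fun h a
    have hc := DFunLike.congr_fun h c
    simp only [Finsupp.add_apply, Finsupp.single_apply, eq_self_iff_true, if_true] at ha hc
    have hca : ¬ c = a := fun hh => hac hh.symm
    rw [if_neg hca] at ha
    have hda : d = a := by
      by_cases hda : d = a
      · exact hda
      · by_cases hba : b = a <;> simp [hda, hba] at ha
    have hbc : b = c := by
      rw [if_neg hac] at hc
      by_cases hbc : b = c
      · exact hbc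
      · by_cases hdc : d = c <;> simp [hbc, hdc] at hc
    exact Or.inr ⟨hda.symm, hbc⟩

section A
variable {S : Type*} [CommSemiring S] {Sp : Set S} {deg : S → ℕ}

lemma sum_two_eq (p p' : Sp) :
    ((Finsupp.single p 1 + Finsupp.single p' 1 : Sp →₀ ℕ).sum fun q n => n • (q : S))
      = (p : S) + (p' : S) := by
  rw [Finsupp.sum_add_index' (h := fun (q : Sp) (n : ℕ) => n • (q : S)) (by simp)
    (by intro a b c; show (b + c) • (a : S) = b • (a : S) + c • (a : S); exact add_nsmul _ b c)]
  simp [Finsupp.sum_single_index]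

lemma zero_not_mem_Sp
    (hadd_free : ∀ x : S, ∃! f : Sp →₀ ℕ, x = f.sum fun p n => n • (p : S)) :
    (0 : S) ∉ Sp := by
  intro h0
  obtain ⟨f, hf, hu⟩ := hadd_free 0
  have e1 := hu 0 (by simp)
  have e2 := hu (Finsupp.single ⟨0, h0⟩ 1) (by
    show (0 : S) = _
    rw [Finsupp.sum_single_index (by simp)]; simp)
  rw [← e1] at e2
  exact one_ne_zero (Finsupp.single_eq_zero.mp e2)

lemma pair_eq
    (hadd_free : ∀ x : S, ∃! f : Sp →₀ ℕ, x = f.sum fun p n => n • (p : S))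
    {p p' r r' : S} (hp : p ∈ Sp) (hp' : p' ∈ Sp) (hr : r ∈ Sp) (hr' : r' ∈ Sp)
    (h : p + p' = r + r') :
    (p = r ∧ p' = r') ∨ (p = r' ∧ p' = r) := by
  obtain ⟨f, hf, hu⟩ := hadd_free (p + p')
  have e1 := hu (Finsupp.single ⟨p, hp⟩ 1 + Finsupp.single ⟨p', hp'⟩ 1) (by
    show p + p' = _
    exact (sum_two_eq ⟨p, hp⟩ ⟨p', hp'⟩).symm)
  have e2 := hu (Finsupp.single ⟨r, hr⟩ 1 + Finsupp.single ⟨r', hr'⟩ 1) (by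
    show p + p' = _
    rw [h]; exact (sum_two_eq ⟨r, hr⟩ ⟨r', hr'⟩).symm)
  have E := e1.trans e2.symm
  rcases single_pair_eq E with ⟨h1, h2⟩ | ⟨h1, h2⟩
  · exact Or.inl ⟨congrArg Subtype.val h1, congrArg Subtype.val h2⟩
  · exact Or.inr ⟨congrArg Subtype.val h1, congrArg Subtype.val h2⟩

lemma sum_not_mem
    (hadd_free : ∀ x : S, ∃! f : Sp →₀ ℕ, x = f.sum fun p n => n • (p : S))
    (hdeg_add : ∀ x y : S, deg (x + y) = deg x + deg y)
    (hfiber0 : ∀ x : S, deg x = 0 ↔ x = 0)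
    {p p' : S} (hp : p ∈ Sp) (hp' : p' ∈ Sp) : p + p' ∉ Sp := by
  classical
  intro hs
  obtain ⟨f, hf, hu⟩ := hadd_free (p + p')
  have e1 := hu (Finsupp.single ⟨p + p', hs⟩ 1) (by
    show p + p' = _
    rw [Finsupp.sum_single_index (by simp)]; simp)
  have e2 := hu (Finsupp.single ⟨p, hp⟩ 1 + Finsupp.single ⟨p', hp'⟩ 1) (by
    show p + p' = _
    exact (sum_two_eq ⟨p, hp⟩ ⟨p', hp'⟩).symm)
  have E := e1.trans e2.symm
  have h1 := DFunLike.congr_fun E ⟨p, hp⟩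
  simp only [Finsupp.add_apply, Finsupp.single_apply, Subtype.mk_eq_mk, eq_self_iff_true,
    if_true] at h1
  have hpp : p + p' = p := by
    split_ifs at h1 with h2 h3 <;> first | assumption | omega
  have hdd : deg p + deg p' = deg p := by rw [← hdeg_add, hpp]
  have h0 : p' = (0 : S) := (hfiber0 p').mp (by omega)
  exact zero_not_mem_Sp hadd_free (h0 ▸ hp')

end A

section B
variable {S : Type*} [CommSemiring S] {Sp Sq : Set S} {deg : S → ℕ}

lemma pow_mem_Sp (hone_mem : (1 : S) ∈ Sp)
    (hmul_mem : ∀ x ∈ Sp, ∀ y ∈ Sp, x * y ∈ Sp) {x : S} (hx : x ∈ Sp) :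
    ∀ n : ℕ, x ^ n ∈ Sp := by
  intro n
  induction n with
  | zero => simpa using hone_mem
  | succ n ih => rw [pow_succ]; exact hmul_mem _ ih _ hx

lemma prod_mem_Sp (hSqSp : Sq ⊆ Sp) (hone_mem : (1 : S) ∈ Sp)
    (hmul_mem : ∀ x ∈ Sp, ∀ y ∈ Sp, x * y ∈ Sp) (f : Sq →₀ ℕ) :
    (f.prod fun q n => (q : S) ^ n) ∈ Sp := by
  induction f using Finsupp.induction with
  | zero => simpa using hone_mem
  | single_add a b f _ _ ih =>
    rw [Finsupp.prod_add_index' (fun q => pow_zero _) (fun q m n => pow_add _ m n),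
      Finsupp.prod_single_index (h := fun (q : Sq) (n : ℕ) => (q : S) ^ n) (pow_zero _)]
    exact hmul_mem _ (pow_mem_Sp hone_mem hmul_mem (hSqSp a.2) b) _ ih

lemma one_not_mem_Sq (hone_mem : (1 : S) ∈ Sp)
    (hmul_free : ∀ x ∈ Sp, ∃! f : Sq →₀ ℕ, x = f.prod fun q n => (q : S) ^ n) :
    (1 : S) ∉ Sq := by
  intro h1
  obtain ⟨f, hf, hu⟩ := hmul_free 1 hone_mem
  have e1 := hu 0 (by simp)
  have e2 := hu (Finsupp.single ⟨1, h1⟩ 1) (by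
    show (1 : S) = _
    rw [Finsupp.prod_single_index (h := fun (q : Sq) (n : ℕ) => (q : S) ^ n) (pow_zero _)]; simp)
  rw [← e1] at e2
  exact one_ne_zero (Finsupp.single_eq_zero.mp e2)

lemma mem_Sp_deg_pos
    (hadd_free : ∀ x : S, ∃! f : Sp →₀ ℕ, x = f.sum fun p n => n • (p : S))
    (hfiber0 : ∀ x : S, deg x = 0 ↔ x = 0) {x : S} (hx : x ∈ Sp) : 1 ≤ deg x := by
  rcases Nat.eq_zero_or_pos (deg x) with h | h
  · exact absurd (((hfiber0 x).mp h) ▸ hx) (zero_not_mem_Sp hadd_free)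
  · exact h

lemma two_le_deg_of_mem_Sq
    (hadd_free : ∀ x : S, ∃! f : Sp →₀ ℕ, x = f.sum fun p n => n • (p : S))
    (hfiber0 : ∀ x : S, deg x = 0 ↔ x = 0)
    (hSqSp : Sq ⊆ Sp) (hone_mem : (1 : S) ∈ Sp)
    (hmul_free : ∀ x ∈ Sp, ∃! f : Sq →₀ ℕ, x = f.prod fun q n => (q : S) ^ n)
    (hfiber1 : ∀ x ∈ Sp, (deg x = 1 ↔ x = 1))
    {q : S} (hq : q ∈ Sq) : 2 ≤ deg q := by
  have hqp := hSqSp hq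
  have h1 := mem_Sp_deg_pos hadd_free hfiber0 hqp
  rcases Nat.lt_or_ge (deg q) 2 with h | h
  · have : deg q = 1 := by omega
    exact absurd (((hfiber1 q hqp).mp this) ▸ hq) (one_not_mem_Sq hone_mem hmul_free)
  · exact h

/-- Every additive prime that is neither `1` nor a multiplicative prime factors as `q * y`
with both factors of degree at least 2. -/
lemma factor_bad
    (hadd_free : ∀ x : S, ∃! f : Sp →₀ ℕ, x = f.sum fun p n => n • (p : S))
    (hfiber0 : ∀ x : S, deg x = 0 ↔ x = 0)
    (hSqSp : Sq ⊆ Sp) (hone_mem : (1 : S) ∈ Sp)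
    (hmul_mem : ∀ x ∈ Sp, ∀ y ∈ Sp, x * y ∈ Sp)
    (hmul_free : ∀ x ∈ Sp, ∃! f : Sq →₀ ℕ, x = f.prod fun q n => (q : S) ^ n)
    (hfiber1 : ∀ x ∈ Sp, (deg x = 1 ↔ x = 1))
    {x : S} (hx : x ∈ Sp) (hxq : x ∉ Sq) (hx1 : x ≠ 1) :
    ∃ q y : S, q ∈ Sq ∧ y ∈ Sp ∧ x = q * y ∧ 2 ≤ deg q ∧ 2 ≤ deg y := by
  classical
  obtain ⟨f, hf, hu⟩ := hmul_free x hx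
  have hf0 : f ≠ 0 := by
    intro h
    rw [h] at hf
    simp at hf
    exact hx1 hf
  obtain ⟨q, hqs⟩ := Finsupp.support_nonempty_iff.mpr hf0
  have hfq : 1 ≤ f q := Nat.one_le_iff_ne_zero.mpr (Finsupp.mem_support_iff.mp hqs)
  have hle : Finsupp.single q 1 ≤ f := Finsupp.single_le_iff.mpr hfq
  set g := f - Finsupp.single q 1 with hg
  have hsplit : Finsupp.single q 1 + g = f := add_tsub_cancel_of_le hle
  set y := g.prod fun q n => (q : S) ^ n with hy
  have hyp : y ∈ Sp := prod_mem_Sp hSqSp hone_mem hmul_mem g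
  have hxqy : x = (q : S) * y := by
    rw [hf, ← hsplit, Finsupp.prod_add_index' (fun q => pow_zero _) (fun q m n => pow_add _ m n),
      Finsupp.prod_single_index (h := fun (q : Sq) (n : ℕ) => (q : S) ^ n) (pow_zero _), pow_one]
  have hy1 : y ≠ 1 := by
    intro h
    rw [h, mul_one] at hxqy
    exact hxq (hxqy ▸ q.2)
  have hydeg : 2 ≤ deg y := by
    have h1 := mem_Sp_deg_pos hadd_free hfiber0 hyp
    rcases Nat.lt_or_ge (deg y) 2 with h | h
    · exact absurd ((hfiber1 y hyp).mp (by omega)) hy1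
    · exact h
  exact ⟨q, y, q.2, hyp, hxqy,
    two_le_deg_of_mem_Sq hadd_free hfiber0 hSqSp hone_mem hmul_free hfiber1 q.2, hydeg⟩

end B

section C
variable {S : Type*} [CommSemiring S] {Sp Sq : Set S} {deg : S → ℕ}

lemma cntIn_eq_ncard (P : Set S) (n : ℕ) :
    cntIn deg P n = ({x | deg x = n ∧ x ∈ P} : Set S).ncard :=
  Nat.card_coe_set_eq _

lemma cntAll_eq_ncard (n : ℕ) :
    cntAll deg n = ({x | deg x = n} : Set S).ncard :=
  Nat.card_coe_set_eq _

lemma cntIn_le_cntAll (hfib : ∀ n : ℕ, {x : S | deg x = n}.Finite) (P : Set S) (n : ℕ) :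
    cntIn deg P n ≤ cntAll deg n := by
  rw [cntIn_eq_ncard, cntAll_eq_ncard]
  exact Set.ncard_le_ncard (fun x hx => hx.1) (hfib n)

lemma cntIn_mono_set (hfib : ∀ n : ℕ, {x : S | deg x = n}.Finite) {P P' : Set S} (h : P ⊆ P')
    (n : ℕ) : cntIn deg P n ≤ cntIn deg P' n := by
  rw [cntIn_eq_ncard, cntIn_eq_ncard]
  exact Set.ncard_le_ncard (fun x hx => ⟨hx.1, h hx.2⟩) ((hfib n).subset (fun x hx => hx.1))

/-- Key pair-counting estimate: distinct-degree pairs of additive primes give distinct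
non-prime sums. -/
lemma pair_count
    (hadd_free : ∀ x : S, ∃! f : Sp →₀ ℕ, x = f.sum fun p n => n • (p : S))
    (hdeg_add : ∀ x y : S, deg (x + y) = deg x + deg y)
    (hfiber0 : ∀ x : S, deg x = 0 ↔ x = 0)
    (hfib : ∀ n : ℕ, {x : S | deg x = n}.Finite)
    {a b : ℕ} (hab : a ≠ b) :
    cntIn deg Sp a * cntIn deg Sp b + cntIn deg Sp (a + b) ≤ cntAll deg (a + b) := by
  classical
  haveI : Finite {x : S // deg x = a + b} := (hfib (a + b)).to_subtype
  have key :
      Nat.card (({x : S // deg x = a ∧ x ∈ Sp} × {x : S // deg x = b ∧ x ∈ Sp}) ⊕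
        {x : S // deg x = a + b ∧ x ∈ Sp}) ≤ Nat.card {x : S // deg x = a + b} := by
    apply Nat.card_le_card_of_injective
      (f := Sum.elim
        (fun pp => ⟨(pp.1 : S) + (pp.2 : S), by
          rcases pp with ⟨⟨p, hp1, hp2⟩, ⟨p', hp1', hp2'⟩⟩
          simp [hdeg_add, hp1, hp1']⟩)
        (fun x => ⟨(x : S), x.2.1⟩))
    rintro (⟨⟨p, hpd, hp⟩, ⟨p', hpd', hp'⟩⟩ | ⟨x, hxd, hx⟩)
      (⟨⟨r, hrd, hr⟩, ⟨r', hrd', hr'⟩⟩ | ⟨z, hzd, hz⟩) h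
    · simp only [Sum.elim_inl, Subtype.mk_eq_mk] at h
      rcases pair_eq hadd_free hp hp' hr hr' h with ⟨h1, h2⟩ | ⟨h1, h2⟩
      · simp only [Sum.inl.injEq, Prod.mk.injEq, Subtype.mk_eq_mk]
        exact ⟨h1, h2⟩
      · exfalso; apply hab; rw [← hpd, h1, hrd']
    · exfalso
      simp only [Sum.elim_inl, Sum.elim_inr, Subtype.mk_eq_mk] at h
      exact sum_not_mem hadd_free hdeg_add hfiber0 hp hp' (h ▸ hz)
    · exfalso
      simp only [Sum.elim_inl, Sum.elim_inr, Subtype.mk_eq_mk] at h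
      exact sum_not_mem hadd_free hdeg_add hfiber0 hr hr' (h ▸ hx)
    · simp only [Sum.elim_inr, Subtype.mk_eq_mk] at h
      simp only [Sum.inr.injEq, Subtype.mk_eq_mk]
      exact h
  haveI : Finite {x : S // deg x = a ∧ x ∈ Sp} :=
    ((hfib a).subset (fun x hx => hx.1)).to_subtype
  haveI : Finite {x : S // deg x = b ∧ x ∈ Sp} :=
    ((hfib b).subset (fun x hx => hx.1)).to_subtype
  haveI : Finite {x : S // deg x = a + b ∧ x ∈ Sp} :=
    ((hfib (a + b)).subset (fun x hx => hx.1)).to_subtype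
  rw [Nat.card_sum, Nat.card_prod] at key
  exact key

lemma cntIn_split
    (hfib : ∀ n : ℕ, {x : S | deg x = n}.Finite) (n : ℕ) :
    cntIn deg Sp n ≤ cntIn deg Sq n + 1 +
      ({x : S | deg x = n ∧ x ∈ Sp ∧ x ∉ Sq ∧ x ≠ 1}).ncard := by
  classical
  rw [cntIn_eq_ncard, cntIn_eq_ncard]
  have hsub : ({x : S | deg x = n ∧ x ∈ Sp} : Set S) ⊆
      ({x | deg x = n ∧ x ∈ Sq} ∪ ({1} ∪ {x | deg x = n ∧ x ∈ Sp ∧ x ∉ Sq ∧ x ≠ 1})) := by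
    intro x ⟨hxd, hxp⟩
    by_cases hq : x ∈ Sq
    · exact Or.inl ⟨hxd, hq⟩
    · by_cases h1 : x = 1
      · exact Or.inr (Or.inl h1)
      · exact Or.inr (Or.inr ⟨hxd, hxp, hq, h1⟩)
  calc ({x : S | deg x = n ∧ x ∈ Sp}).ncard
      ≤ (({x : S | deg x = n ∧ x ∈ Sq} ∪ ({1} ∪ {x | deg x = n ∧ x ∈ Sp ∧ x ∉ Sq ∧ x ≠ 1})) :
          Set S).ncard := by
        refine Set.ncard_le_ncard hsub
          (Set.Finite.union ((hfib n).subset (fun x hx => hx.1))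
            (Set.Finite.union (Set.finite_singleton _)
              ((hfib n).subset (fun x hx => hx.1))))
    _ ≤ ({x : S | deg x = n ∧ x ∈ Sq}).ncard +
        (({1} : Set S) ∪ {x | deg x = n ∧ x ∈ Sp ∧ x ∉ Sq ∧ x ≠ 1}).ncard :=
        Set.ncard_union_le _ _
    _ ≤ ({x : S | deg x = n ∧ x ∈ Sq}).ncard + (1 +
        ({x : S | deg x = n ∧ x ∈ Sp ∧ x ∉ Sq ∧ x ≠ 1}).ncard) := by
        have := Set.ncard_union_le ({1} : Set S) {x : S | deg x = n ∧ x ∈ Sp ∧ x ∉ Sq ∧ x ≠ 1}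
        simp only [Set.ncard_singleton] at this
        omega
    _ = _ := by omega

lemma np_add_le (hfib : ∀ n : ℕ, {x : S | deg x = n}.Finite) (m : ℕ) :
    ({z : S | deg z = m ∧ z ∉ Sp}).ncard + cntIn deg Sp m ≤ cntAll deg m := by
  rw [cntIn_eq_ncard, cntAll_eq_ncard]
  rw [← Set.ncard_union_eq (by
      rw [Set.disjoint_iff]
      rintro x ⟨⟨_, h1⟩, ⟨_, h2⟩⟩
      exact absurd h2 h1)
    ((hfib m).subset (fun x hx => hx.1)) ((hfib m).subset (fun x hx => hx.1))]
  refine Set.ncard_le_ncard ?_ (hfib m)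
  rintro x (⟨h, _⟩ | ⟨h, _⟩) <;> exact h

lemma count_lt_le (hfib : ∀ n : ℕ, {x : S | deg x = n}.Finite) :
    ∀ K : ℕ, ({z : S | z ∉ Sp ∧ deg z < K}).ncard ≤
      ∑ m ∈ Finset.range K, ({z : S | deg z = m ∧ z ∉ Sp}).ncard := by
  intro K
  induction K with
  | zero => simp
  | succ K ih =>
    have hset : ({z : S | z ∉ Sp ∧ deg z < K + 1} : Set S) =
        {z | z ∉ Sp ∧ deg z < K} ∪ {z | deg z = K ∧ z ∉ Sp} := by
      ext z
      simp only [Set.mem_setOf_eq, Set.mem_union]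
      constructor
      · rintro ⟨h1, h2⟩
        rcases Nat.lt_or_ge (deg z) K with h | h
        · exact Or.inl ⟨h1, h⟩
        · exact Or.inr ⟨by omega, h1⟩
      · rintro (⟨h1, h2⟩ | ⟨h1, h2⟩)
        · exact ⟨h1, by omega⟩
        · exact ⟨h2, by omega⟩
    rw [hset, Finset.sum_range_succ]
    calc ({z : S | z ∉ Sp ∧ deg z < K} ∪ {z | deg z = K ∧ z ∉ Sp}).ncard
        ≤ ({z : S | z ∉ Sp ∧ deg z < K}).ncard + ({z : S | deg z = K ∧ z ∉ Sp}).ncard :=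
          Set.ncard_union_le _ _
      _ ≤ _ := by omega

end C

section D
variable {S : Type*} [CommSemiring S] {Sp Sq : Set S} {deg : S → ℕ}

lemma bad_count
    (hadd_free : ∀ x : S, ∃! f : Sp →₀ ℕ, x = f.sum fun p n => n • (p : S))
    (hdeg_add : ∀ x y : S, deg (x + y) = deg x + deg y)
    (hdeg_mul : ∀ x y : S, deg (x * y) = deg x * deg y)
    (hfiber0 : ∀ x : S, deg x = 0 ↔ x = 0)
    (hfib : ∀ n : ℕ, {x : S | deg x = n}.Finite)
    (hSqSp : Sq ⊆ Sp) (hone_mem : (1 : S) ∈ Sp)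
    (hmul_mem : ∀ x ∈ Sp, ∀ y ∈ Sp, x * y ∈ Sp)
    (hmul_free : ∀ x ∈ Sp, ∃! f : Sq →₀ ℕ, x = f.prod fun q n => (q : S) ^ n)
    (hfiber1 : ∀ x ∈ Sp, (deg x = 1 ↔ x = 1)) (n : ℕ) :
    ({x : S | deg x = n ∧ x ∈ Sp ∧ x ∉ Sq ∧ x ≠ 1}).ncard ≤
      ∑ m ∈ Finset.range (n / 2 + 3), ({z : S | deg z = m ∧ z ∉ Sp}).ncard := by
  classical
  have hfin : ({z : S | z ∉ Sp ∧ deg z < n / 2 + 3}).Finite := by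
    refine Set.Finite.subset
      (Set.Finite.biUnion (Finset.range (n / 2 + 3) : Finset ℕ).finite_toSet
        (fun m _ => hfib m)) ?_
    intro z hz
    exact Set.mem_biUnion (Finset.mem_coe.mpr (Finset.mem_range.mpr hz.2)) rfl
  have key : ({x : S | deg x = n ∧ x ∈ Sp ∧ x ∉ Sq ∧ x ≠ 1}).ncard ≤
      ({z : S | z ∉ Sp ∧ deg z < n / 2 + 3}).ncard := by
    rw [← Nat.card_coe_set_eq, ← Nat.card_coe_set_eq]
    haveI := hfin.to_subtype
    have H : ∀ x : ↥{x : S | deg x = n ∧ x ∈ Sp ∧ x ∉ Sq ∧ x ≠ 1},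
        ∃ q y : S, q ∈ Sq ∧ y ∈ Sp ∧ (x : S) = q * y ∧ 2 ≤ deg q ∧ 2 ≤ deg y :=
      fun x => factor_bad hadd_free hfiber0 hSqSp hone_mem hmul_mem hmul_free hfiber1
        x.2.2.1 x.2.2.2.1 x.2.2.2.2
    choose qf yf hq hy hxy hdq hdy using H
    apply Nat.card_le_card_of_injective
      (f := fun x => (⟨qf x + yf x,
        ⟨sum_not_mem hadd_free hdeg_add hfiber0 (hSqSp (hq x)) (hy x), by
          have h1 : deg (qf x) * deg (yf x) = n := by
            rw [← hdeg_mul, ← hxy x]; exact x.2.1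
          have h2 := hdq x
          have h3 := hdy x
          have h5 : deg (qf x + yf x) = deg (qf x) + deg (yf x) := hdeg_add _ _
          have h4 : 2 * (deg (qf x) + deg (yf x)) ≤ deg (qf x) * deg (yf x) + 4 := by
            nlinarith
          omega⟩⟩ : ↥{z : S | z ∉ Sp ∧ deg z < n / 2 + 3}))
    intro x x' hh
    have heq : qf x + yf x = qf x' + yf x' := congrArg Subtype.val hh
    apply Subtype.ext
    rcases pair_eq hadd_free (hSqSp (hq x)) (hy x) (hSqSp (hq x')) (hy x') heq with
      ⟨h1, h2⟩ | ⟨h1, h2⟩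
    · rw [hxy x, hxy x', h1, h2]
    · rw [hxy x, hxy x', h1, h2, mul_comm]
  exact key.trans (count_lt_le hfib (n / 2 + 3))

end D

section E

lemma mono_le {P : ℕ → ℕ} {N : ℕ} (hm : ∀ n, N ≤ n → P n ≤ P (n + 1)) :
    ∀ m n, N ≤ m → m ≤ n → P m ≤ P n := by
  intro m n hNm hmn
  induction n, hmn using Nat.le_induction with
  | base => exact le_rfl
  | succ n hn ih => exact ih.trans (hm n (hNm.trans hn))

lemma pair_key {P : ℕ → ℕ} {N : ℕ}
    (hm : ∀ n, N ≤ n → P n ≤ P (n + 1))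
    (hpair : ∀ a b, N ≤ a → N ≤ b → a ≠ b → 2 * (P a * P b) ≤ P (a + b)) :
    ∀ m, N ≤ m → 2 * (P m * P m) ≤ P (2 * m + 1) := by
  intro m hNm
  have h1 := hpair m (m + 1) hNm (by omega) (by omega)
  have h2 := hm m hNm
  have h3 : m + (m + 1) = 2 * m + 1 := by ring
  rw [h3] at h1
  calc 2 * (P m * P m) ≤ 2 * (P m * P (m + 1)) :=
        Nat.mul_le_mul_left _ (Nat.mul_le_mul_left _ h2)
    _ ≤ P (2 * m + 1) := h1

lemma growth_unbounded {P : ℕ → ℕ} {N : ℕ}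
    (hm : ∀ n, N ≤ n → P n ≤ P (n + 1)) (hp : ∀ n, N ≤ n → 1 ≤ P n)
    (hpair : ∀ a b, N ≤ a → N ≤ b → a ≠ b → 2 * (P a * P b) ≤ P (a + b)) :
    ∀ C : ℕ, ∃ M, ∀ n, M ≤ n → C ≤ P n := by
  have hkey := pair_key hm hpair
  have hstep : ∀ C : ℕ, ∃ m, N ≤ m ∧ C ≤ P m := by
    intro C
    induction C with
    | zero => exact ⟨N, le_rfl, Nat.zero_le _⟩
    | succ C ih =>
      obtain ⟨m, hNm, hCm⟩ := ih
      refine ⟨2 * m + 1, by omega, ?_⟩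
      have h1 := hkey m hNm
      have h2 := hp m hNm
      nlinarith [h1, h2, hCm]
  intro C
  obtain ⟨m, hNm, hCm⟩ := hstep C
  exact ⟨m, fun n hn => hCm.trans (mono_le hm m n hNm hn)⟩

lemma growth_linear {P : ℕ → ℕ} {N : ℕ}
    (hm : ∀ n, N ≤ n → P n ≤ P (n + 1)) (hp : ∀ n, N ≤ n → 1 ≤ P n)
    (hpair : ∀ a b, N ≤ a → N ≤ b → a ≠ b → 2 * (P a * P b) ≤ P (a + b)) :
    ∃ X, N ≤ X ∧ ∀ m, X ≤ m → m + 8 ≤ P m := by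
  have hkey := pair_key hm hpair
  obtain ⟨M0, hM0⟩ := growth_unbounded hm hp hpair 2
  obtain ⟨m₀, hm₀⟩ : ∃ m₀, m₀ = M0 + N := ⟨_, rfl⟩
  have hm₀N : N ≤ m₀ := by omega
  have hP2 : ∀ n, m₀ ≤ n → 2 ≤ P n := fun n hn => hM0 n (by omega)
  -- dyadic growth
  have hdy : ∀ k : ℕ, 2 ^ (2 ^ k) ≤ P (2 ^ k * (m₀ + 1) - 1) := by
    intro k
    induction k with
    | zero => simpa using hP2 m₀ le_rfl
    | succ k ih =>
      have hs : m₀ + 1 ≤ 2 ^ k * (m₀ + 1) := by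
        have h := Nat.mul_le_mul_right (m₀ + 1) (Nat.one_le_two_pow (n := k))
        simpa using h
      have hu : m₀ ≤ 2 ^ k * (m₀ + 1) - 1 := by omega
      have h1 := hkey _ (hm₀N.trans hu)
      have heq : 2 ^ (k + 1) * (m₀ + 1) = 2 * (2 ^ k * (m₀ + 1)) := by ring
      have h2 : 2 * (2 ^ k * (m₀ + 1) - 1) + 1 = 2 ^ (k + 1) * (m₀ + 1) - 1 := by omega
      rw [h2] at h1
      calc 2 ^ 2 ^ (k + 1) = 2 ^ 2 ^ k * 2 ^ 2 ^ k := by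
            rw [← pow_add]; congr 1; ring
        _ ≤ P (2 ^ k * (m₀ + 1) - 1) * P (2 ^ k * (m₀ + 1) - 1) := Nat.mul_le_mul ih ih
        _ ≤ P (2 ^ (k + 1) * (m₀ + 1) - 1) := by omega
  obtain ⟨k, hkdef⟩ : ∃ k, k = 2 * (m₀ + 4) := ⟨_, rfl⟩
  obtain ⟨X, hXdef⟩ : ∃ X, X = 2 ^ k * (m₀ + 1) - 1 := ⟨_, rfl⟩
  have h2k : k + m₀ + 4 ≤ 2 ^ k := by
    have h1 : m₀ + 5 ≤ 2 ^ (m₀ + 4) := Nat.lt_two_pow_self (n := m₀ + 4)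
    have h2 : 2 ^ k = 2 ^ (m₀ + 4) * 2 ^ (m₀ + 4) := by
      rw [hkdef, two_mul, pow_add]
    have h4 := Nat.mul_le_mul h1 h1
    nlinarith [h4]
  have hs : m₀ + 1 ≤ 2 ^ k * (m₀ + 1) := by
    have h := Nat.mul_le_mul_right (m₀ + 1) (Nat.one_le_two_pow (n := k))
    simpa using h
  have hbig : 2 * X + 8 ≤ 2 ^ 2 ^ k := by
    have h1 : 2 ^ (k + m₀ + 4) ≤ 2 ^ 2 ^ k := Nat.pow_le_pow_right (by omega) h2k
    have h2 : 2 ^ (k + m₀ + 4) = 2 ^ (k + 1) * 2 ^ (m₀ + 3) := by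
      rw [← pow_add]; congr 1; ring
    have h3 : 8 * (m₀ + 1) ≤ 2 ^ (m₀ + 3) := by
      have h := Nat.lt_two_pow_self (n := m₀)
      have h4 : 2 ^ (m₀ + 3) = 2 ^ m₀ * 8 := by rw [pow_add]; ring
      omega
    have h8 : 2 ^ (k + 1) * (8 * (m₀ + 1)) ≤ 2 ^ (k + 1) * 2 ^ (m₀ + 3) :=
      Nat.mul_le_mul_left _ h3
    have h10 : 2 ^ (k + 1) * (8 * (m₀ + 1)) = 8 * (2 ^ (k + 1) * (m₀ + 1)) := by ring
    have h9 : 0 < 2 ^ (k + 1) * (m₀ + 1) := by positivity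
    have heq : 2 ^ (k + 1) * (m₀ + 1) = 2 * (2 ^ k * (m₀ + 1)) := by ring
    omega
  have hPX : 2 * X + 8 ≤ P X := hbig.trans (hXdef.symm ▸ hdy k)
  have hXN : N ≤ X := by omega
  have hXm₀ : m₀ ≤ X := by omega
  refine ⟨X, hXN, ?_⟩
  intro m
  induction m using Nat.strong_induction_on with
  | _ m ih =>
    intro hXm
    by_cases hcase : m ≤ 2 * X
    · have h1 : P X ≤ P m := mono_le hm X m hXN hXm
      omega
    · push_neg at hcase
      obtain ⟨m', hm'def⟩ : ∃ m', m' = (m - 1) / 2 := ⟨_, rfl⟩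
      have hfacts : X ≤ m' ∧ m' < m ∧ 2 * m' + 1 ≤ m ∧ m ≤ 2 * m' + 2 := by omega
      have h1 : m' + 8 ≤ P m' := ih m' hfacts.2.1 hfacts.1
      have h2 := hkey m' (hXN.trans hfacts.1)
      have h3 : P (2 * m' + 1) ≤ P m := mono_le hm _ _ (by omega) hfacts.2.2.1
      nlinarith
end E


/-- In an arithmetical semiring `(S, +, □, ∂)` (additive monoid free on the additive primes `Sp`,
multiplicative monoid of additive primes free on the multiplicative primes `Sq`, degree a
semiring homomorphism to `ℕ` with finite fibers, `∂⁻¹(0) = {0}` and `∂⁻¹(1) ∩ Sp = {1}`),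
assumed monotonic and
satisfying axiom `G₁⁺` (`S(n) − S⁺(n) = o(S⁺(n))`) with `S⁺(n) > 0` for large `n`:
axiom `G₁□` holds, i.e. `S⁺(n) − S□(n) = o(S⁺(n))`. -/
theorem stmt_9 {S : Type*} [CommSemiring S]
    (Sp Sq : Set S) (deg : S → ℕ)
    (hdeg_zero : deg 0 = 0) (hdeg_one : deg 1 = 1)
    (hdeg_add : ∀ x y : S, deg (x + y) = deg x + deg y)
    (hdeg_mul : ∀ x y : S, deg (x * y) = deg x * deg y)
    (hfiber0 : ∀ x : S, deg x = 0 ↔ x = 0)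
    (hfib : ∀ n : ℕ, {x : S | deg x = n}.Finite)
    (hadd_free : ∀ x : S, ∃! f : Sp →₀ ℕ, x = f.sum fun p n => n • (p : S))
    (hSqSp : Sq ⊆ Sp)
    (hone_mem : (1 : S) ∈ Sp)
    (hmul_mem : ∀ x ∈ Sp, ∀ y ∈ Sp, x * y ∈ Sp)
    (hmul_free : ∀ x ∈ Sp, ∃! f : Sq →₀ ℕ, x = f.prod fun q n => (q : S) ^ n)
    (hfiber1 : ∀ x ∈ Sp, (deg x = 1 ↔ x = 1))
    (hmono : ∃ N : ℕ, ∀ n ≥ N, cntIn deg Sp n ≤ cntIn deg Sp (n + 1))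
    (hG1 : (fun n : ℕ => (cntAll deg n : ℝ) - cntIn deg Sp n)
      =o[Filter.atTop] fun n : ℕ => (cntIn deg Sp n : ℝ))
    (hpos : ∀ᶠ n : ℕ in Filter.atTop, 0 < cntIn deg Sp n) :
    (fun n : ℕ => (cntIn deg Sp n : ℝ) - cntIn deg Sq n)
      =o[Filter.atTop] fun n : ℕ => (cntIn deg Sp n : ℝ) := by
  classical
  obtain ⟨N, hmonoN⟩ := hmono
  obtain ⟨N₀, hposN⟩ := Filter.eventually_atTop.mp hpos
  have hQP : ∀ n, cntIn deg Sq n ≤ cntIn deg Sp n := fun n => cntIn_mono_set hfib hSqSp n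
  have hPA : ∀ n, cntIn deg Sp n ≤ cntAll deg n := fun n => cntIn_le_cntAll hfib Sp n
  obtain ⟨M₀, hM₀⟩ := Filter.eventually_atTop.mp
    ((Asymptotics.isLittleO_iff.mp hG1) (by norm_num : (0:ℝ) < 1/2))
  obtain ⟨N₁, hN₁⟩ : ∃ N₁, N₁ = N + N₀ + M₀ := ⟨_, rfl⟩
  have hm : ∀ n, N₁ ≤ n → cntIn deg Sp n ≤ cntIn deg Sp (n + 1) :=
    fun n hn => hmonoN n (by omega)
  have hp1 : ∀ n, N₁ ≤ n → 1 ≤ cntIn deg Sp n := fun n hn => hposN n (by omega)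
  have hhalf : ∀ m, M₀ ≤ m → 2 * cntAll deg m ≤ 3 * cntIn deg Sp m := by
    intro m hmm
    have h := hM₀ m hmm
    rw [Real.norm_eq_abs, Real.norm_eq_abs,
      abs_of_nonneg (sub_nonneg.mpr (Nat.cast_le.mpr (hPA m))),
      abs_of_nonneg (Nat.cast_nonneg _)] at h
    have h2 : (2 * cntAll deg m : ℝ) ≤ 3 * cntIn deg Sp m := by push_cast; linarith
    exact_mod_cast h2
  have hpair : ∀ a b, N₁ ≤ a → N₁ ≤ b → a ≠ b →
      2 * (cntIn deg Sp a * cntIn deg Sp b) ≤ cntIn deg Sp (a + b) := by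
    intro a b ha hb hab
    have h1 := pair_count (Sp := Sp) hadd_free hdeg_add hfiber0 hfib hab
    have h2 := hhalf (a + b) (by omega)
    omega
  obtain ⟨X, hXN₁, hlin⟩ := growth_linear hm hp1 hpair
  have hG4 : ∀ n, 4 * X + 40 ≤ n →
      (n / 2 + 3) * cntIn deg Sp (n / 2 + 2) ≤ cntIn deg Sp n := by
    intro n hn
    obtain ⟨U, hU⟩ : ∃ U, U = n / 2 + 2 := ⟨_, rfl⟩
    obtain ⟨V, hV⟩ : ∃ V, V = n - U := ⟨_, rfl⟩
    have hUV : U + V = n := by omega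
    have hXV : X ≤ V := by omega
    have hUneV : U ≠ V := by omega
    have hNU : N₁ ≤ U := by omega
    have hNV : N₁ ≤ V := by omega
    have h1 := hpair U V hNU hNV hUneV
    rw [hUV] at h1
    have h2 := hlin V hXV
    have hU3 : n / 2 + 3 = U + 1 := by omega
    rw [hU3, ← hU]
    calc (U + 1) * cntIn deg Sp U ≤ (V + 8) * cntIn deg Sp U :=
          Nat.mul_le_mul_right _ (by omega)
      _ ≤ cntIn deg Sp V * cntIn deg Sp U := Nat.mul_le_mul_right _ h2
      _ ≤ cntIn deg Sp n := by nlinarith [h1]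
  rw [Asymptotics.isLittleO_iff]
  intro ε hε
  have hε3 : (0:ℝ) < ε / 3 := by linarith
  obtain ⟨M₂', hM₂'⟩ := Filter.eventually_atTop.mp ((Asymptotics.isLittleO_iff.mp hG1) hε3)
  obtain ⟨M₂, hM₂def⟩ : ∃ M₂, M₂ = M₂' + N₁ := ⟨_, rfl⟩
  have hM₂ : ∀ m, M₂ ≤ m → ‖(cntAll deg m : ℝ) - cntIn deg Sp m‖ ≤
      ε / 3 * ‖(cntIn deg Sp m : ℝ)‖ := fun m hm' => hM₂' m (by omega)
  obtain ⟨Cc, hCc⟩ : ∃ Cc, Cc = ∑ m ∈ Finset.range M₂, ({z : S | deg z = m ∧ z ∉ Sp}).ncard :=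
    ⟨_, rfl⟩
  obtain ⟨M₃, hM₃⟩ := growth_unbounded hm hp1 hpair (Nat.ceil ((1 + Cc : ℝ) / (ε / 3)) + 1)
  refine Filter.eventually_atTop.mpr ⟨4 * X + 40 + 2 * M₂ + M₃ + N₁, ?_⟩
  intro n hn
  -- natural-number inequalities
  have k1 := cntIn_split (Sp := Sp) (Sq := Sq) hfib n
  have k2 := bad_count hadd_free hdeg_add hdeg_mul hfiber0 hfib hSqSp hone_mem hmul_mem
    hmul_free hfiber1 n
  have hsum := Finset.sum_Ico_consecutive
    (f := fun m => ({z : S | deg z = m ∧ z ∉ Sp}).ncard)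
    (Nat.zero_le M₂) (show M₂ ≤ n / 2 + 3 by omega)
  have k3 : ({x : S | deg x = n ∧ x ∈ Sp ∧ x ∉ Sq ∧ x ≠ 1}).ncard ≤
      Cc + ∑ m ∈ Finset.Ico M₂ (n / 2 + 3), ({z : S | deg z = m ∧ z ∉ Sp}).ncard := by
    rw [hCc, Finset.range_eq_Ico]
    have := k2
    rw [Finset.range_eq_Ico, ← hsum] at this
    exact this
  -- real bounds on the tail sum
  have hterm : ∀ m ∈ Finset.Ico M₂ (n / 2 + 3),
      (({z : S | deg z = m ∧ z ∉ Sp}).ncard : ℝ) ≤ ε / 3 * cntIn deg Sp (n / 2 + 2) := by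
    intro m hmIco
    rw [Finset.mem_Ico] at hmIco
    have h1 := np_add_le (Sp := Sp) hfib m
    have h2 := hM₂ m hmIco.1
    rw [Real.norm_eq_abs, Real.norm_eq_abs,
      abs_of_nonneg (sub_nonneg.mpr (Nat.cast_le.mpr (hPA m))),
      abs_of_nonneg (Nat.cast_nonneg _)] at h2
    have h3 : cntIn deg Sp m ≤ cntIn deg Sp (n / 2 + 2) :=
      mono_le hm m (n / 2 + 2) (by omega) (by omega)
    have h4 : (({z : S | deg z = m ∧ z ∉ Sp}).ncard : ℝ) ≤
        (cntAll deg m : ℝ) - cntIn deg Sp m := by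
      have hc := (Nat.cast_le (α := ℝ)).mpr h1
      push_cast at hc
      linarith
    have h5 : (cntIn deg Sp m : ℝ) ≤ cntIn deg Sp (n / 2 + 2) := Nat.cast_le.mpr h3
    have h6 : ε / 3 * (cntIn deg Sp m : ℝ) ≤ ε / 3 * cntIn deg Sp (n / 2 + 2) :=
      mul_le_mul_of_nonneg_left h5 hε3.le
    linarith
  have hcard : ((Finset.Ico M₂ (n / 2 + 3)).card : ℝ) ≤ ((n / 2 + 3 : ℕ) : ℝ) := by
    rw [Nat.card_Ico]
    exact Nat.cast_le.mpr (Nat.sub_le _ _)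
  have hsumIco : (∑ m ∈ Finset.Ico M₂ (n / 2 + 3), (({z : S | deg z = m ∧ z ∉ Sp}).ncard : ℝ))
      ≤ ((n / 2 + 3 : ℕ) : ℝ) * (ε / 3 * cntIn deg Sp (n / 2 + 2)) := by
    have h7 := Finset.sum_le_card_nsmul _ _ _ hterm
    rw [nsmul_eq_mul] at h7
    have h8 : (0:ℝ) ≤ ε / 3 * cntIn deg Sp (n / 2 + 2) := by positivity
    calc (∑ m ∈ Finset.Ico M₂ (n / 2 + 3), (({z : S | deg z = m ∧ z ∉ Sp}).ncard : ℝ))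
        ≤ ((Finset.Ico M₂ (n / 2 + 3)).card : ℝ) * (ε / 3 * cntIn deg Sp (n / 2 + 2)) := h7
      _ ≤ _ := mul_le_mul_of_nonneg_right hcard h8
  have hG4n := hG4 n (by omega)
  have cG4 : ((n / 2 + 3 : ℕ) : ℝ) * (cntIn deg Sp (n / 2 + 2) : ℝ) ≤ cntIn deg Sp n := by
    exact_mod_cast hG4n
  have t2 : ε / 3 * (((n / 2 + 3 : ℕ) : ℝ) * (cntIn deg Sp (n / 2 + 2) : ℝ)) ≤
      ε / 3 * cntIn deg Sp n := mul_le_mul_of_nonneg_left cG4 hε3.le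
  have hM₃n := hM₃ n (by omega)
  have hPnbig : (1 + Cc : ℝ) ≤ ε / 3 * cntIn deg Sp n := by
    have h1 : ((Nat.ceil ((1 + Cc : ℝ) / (ε / 3)) + 1 : ℕ) : ℝ) ≤ cntIn deg Sp n :=
      Nat.cast_le.mpr hM₃n
    have h2 : (1 + Cc : ℝ) / (ε / 3) ≤ Nat.ceil ((1 + Cc : ℝ) / (ε / 3)) := Nat.le_ceil _
    have h3 : (1 + Cc : ℝ) / (ε / 3) ≤ cntIn deg Sp n := by push_cast at h1; linarith
    calc (1 + Cc : ℝ) = (1 + Cc) / (ε / 3) * (ε / 3) := by field_simp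
      _ ≤ (cntIn deg Sp n : ℝ) * (ε / 3) := mul_le_mul_of_nonneg_right h3 hε3.le
      _ = ε / 3 * cntIn deg Sp n := by ring
  simp only [Real.norm_eq_abs]
  rw [abs_of_nonneg (sub_nonneg.mpr (Nat.cast_le.mpr (hQP n))),
    abs_of_nonneg (Nat.cast_nonneg (α := ℝ) _)]
  have c1 : (cntIn deg Sp n : ℝ) ≤ (cntIn deg Sq n : ℝ) + 1 +
      ({x : S | deg x = n ∧ x ∈ Sp ∧ x ∉ Sq ∧ x ≠ 1}).ncard := by
    exact_mod_cast k1
  have c2 : (({x : S | deg x = n ∧ x ∈ Sp ∧ x ∉ Sq ∧ x ≠ 1}).ncard : ℝ) ≤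
      (Cc : ℝ) + ∑ m ∈ Finset.Ico M₂ (n / 2 + 3), (({z : S | deg z = m ∧ z ∉ Sp}).ncard : ℝ) := by
    have := (Nat.cast_le (α := ℝ)).mpr k3
    push_cast at this ⊢
    linarith
  linarith [hsumIco, t2, hPnbig, c1, c2]
end

section
/- Let (S,+,□,∂) be a monotonic arithmetical semiring and let p be the smallest integer with S□(p) ≠ 0. Then for all sufficiently large n: S⁺(n) − S□(n) ≤ S□(p)·S(⌊n/p⌋) + S(⌊n/(p+1)⌋ + p + 1). -/
lemma aux_extract {S : Type*} [CommSemiring S] {Q : Set S} (f : ↥Q →₀ ℕ) (q : ↥Q) (hq : f q ≠ 0) :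
    f.prod (fun r n => (r : S) ^ n)
      = (q : S) * (f - Finsupp.single q 1).prod (fun r n => (r : S) ^ n) := by
  classical
  have hsplit : f = (f - Finsupp.single q 1) + Finsupp.single q 1 := by
    ext a
    rw [Finsupp.add_apply, Finsupp.tsub_apply]
    by_cases h : a = q
    · subst h; simp only [Finsupp.single_eq_same]; omega
    · rw [Finsupp.single_eq_of_ne' (Ne.symm h)]; omega
  conv_lhs => rw [hsplit]
  rw [Finsupp.prod_add_index' (h := fun (r : ↥Q) n => (r : S) ^ n) (fun _ => pow_zero _)
      (fun _ _ _ => pow_add _ _ _),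
    Finsupp.prod_single_index (h := fun (r : ↥Q) n => (r : S) ^ n) (pow_zero _), pow_one, mul_comm]

lemma aux_prod_mem {S : Type*} [CommSemiring S] {Sp Sq : Set S} (hSqSp : Sq ⊆ Sp)
    (hone : (1:S) ∈ Sp) (hmul : ∀ x ∈ Sp, ∀ y ∈ Sp, x * y ∈ Sp) (f : ↥Sq →₀ ℕ) :
    f.prod (fun r n => (r:S)^n) ∈ Sp := by
  have hpow : ∀ x ∈ Sp, ∀ n : ℕ, x ^ n ∈ Sp := by
    intro x hx n
    induction n with
    | zero => simpa using hone
    | succ m ih => rw [pow_succ]; exact hmul _ ih _ hx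
  exact Finset.prod_induction _ (· ∈ Sp) (fun a b ha hb => hmul a ha b hb) hone
    (fun r _ => hpow _ (hSqSp r.2) (f r))

lemma aux_pair_prod {S : Type*} [CommSemiring S] {P : Set S} (a b : ↥P) :
    ((Finsupp.single a 1 + Finsupp.single b 1).prod fun c m => (c:S)^m) = (a : S) * b := by
  rw [Finsupp.prod_add_index' (h := fun (c : ↥P) m => (c : S) ^ m) (fun _ => pow_zero _)
      (fun _ _ _ => pow_add _ _ _),
    Finsupp.prod_single_index (h := fun (c : ↥P) m => (c : S) ^ m) (pow_zero _),
    Finsupp.prod_single_index (h := fun (c : ↥P) m => (c : S) ^ m) (pow_zero _),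
    pow_one, pow_one]

lemma aux_recover {S : Type*} [CommSemiring S] {Sp : Set S}
    (hadd_free : ∀ x : S, ∃! f : Sp →₀ ℕ, x = f.sum fun p n => n • (p : S))
    (hone : (1:S) ∈ Sp)
    {q₁ y₁ q₂ y₂ : S} {k₁ k₂ : ℕ}
    (hq₁ : q₁ ∈ Sp) (hq₁1 : q₁ ≠ 1) (hy₁ : y₁ ∈ Sp) (hy₁1 : y₁ ≠ 1)
    (hq₂ : q₂ ∈ Sp) (hq₂1 : q₂ ≠ 1) (hy₂ : y₂ ∈ Sp) (hy₂1 : y₂ ≠ 1)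
    (h : q₁ + y₁ + k₁ • (1:S) = q₂ + y₂ + k₂ • (1:S)) :
    q₁ * y₁ = q₂ * y₂ := by
  classical
  have h0 : ∀ r : ↥Sp, (0:ℕ) • (r:S) = 0 := fun _ => zero_smul _ _
  have hadd : ∀ (r : ↥Sp) (m n : ℕ), (m+n) • (r:S) = m • (r:S) + n • (r:S) :=
    fun _ _ _ => add_smul _ _ _
  have hsum : ∀ (a b : ↥Sp) (k : ℕ),
      ((Finsupp.single a 1 + Finsupp.single b 1 + Finsupp.single (⟨1,hone⟩ : ↥Sp) k).sum
        fun r n => n • (r : S)) = (a:S) + b + k • (1:S) := by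
    intro a b k
    rw [Finsupp.sum_add_index' (h := fun (r : ↥Sp) n => n • (r : S)) h0 hadd,
      Finsupp.sum_add_index' (h := fun (r : ↥Sp) n => n • (r : S)) h0 hadd,
      Finsupp.sum_single_index (h := fun (r : ↥Sp) n => n • (r : S)) (h0 _),
      Finsupp.sum_single_index (h := fun (r : ↥Sp) n => n • (r : S)) (h0 _),
      Finsupp.sum_single_index (h := fun (r : ↥Sp) n => n • (r : S)) (h0 _), one_smul, one_smul]
  obtain ⟨F, hF, hFu⟩ := hadd_free (q₁ + y₁ + k₁ • (1:S))
  have e₁ : (Finsupp.single (⟨q₁,hq₁⟩ : ↥Sp) 1 + Finsupp.single (⟨y₁,hy₁⟩ : ↥Sp) 1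
      + Finsupp.single (⟨1,hone⟩ : ↥Sp) k₁) = F :=
    hFu _ ((hsum ⟨q₁,hq₁⟩ ⟨y₁,hy₁⟩ k₁).symm)
  have e₂ : (Finsupp.single (⟨q₂,hq₂⟩ : ↥Sp) 1 + Finsupp.single (⟨y₂,hy₂⟩ : ↥Sp) 1
      + Finsupp.single (⟨1,hone⟩ : ↥Sp) k₂) = F :=
    hFu _ (h.trans (hsum ⟨q₂,hq₂⟩ ⟨y₂,hy₂⟩ k₂).symm)
  have e := e₁.trans e₂.symm
  have hG : (Finsupp.single (⟨q₁,hq₁⟩ : ↥Sp) 1 + Finsupp.single (⟨y₁,hy₁⟩ : ↥Sp) 1 : ↥Sp →₀ ℕ)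
      = Finsupp.single (⟨q₂,hq₂⟩ : ↥Sp) 1 + Finsupp.single (⟨y₂,hy₂⟩ : ↥Sp) 1 := by
    ext a
    have ha' := DFunLike.congr_fun e a
    simp only [Finsupp.add_apply] at ha' ⊢
    by_cases ha : a = ⟨1, hone⟩
    · subst ha
      rw [Finsupp.single_eq_of_ne' (fun hh => hq₁1 (congrArg Subtype.val hh)),
          Finsupp.single_eq_of_ne' (fun hh => hy₁1 (congrArg Subtype.val hh)),
          Finsupp.single_eq_of_ne' (fun hh => hq₂1 (congrArg Subtype.val hh)),
          Finsupp.single_eq_of_ne' (fun hh => hy₂1 (congrArg Subtype.val hh))]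
    · rw [Finsupp.single_eq_of_ne' (fun hh => ha hh.symm),
          Finsupp.single_eq_of_ne' (fun hh => ha hh.symm)] at ha'
      omega
  calc q₁ * y₁ = ((Finsupp.single (⟨q₁,hq₁⟩ : ↥Sp) 1
        + Finsupp.single (⟨y₁,hy₁⟩ : ↥Sp) 1).prod
        fun c m => (c:S)^m) := (aux_pair_prod (⟨q₁,hq₁⟩ : ↥Sp) ⟨y₁,hy₁⟩).symm
    _ = ((Finsupp.single (⟨q₂,hq₂⟩ : ↥Sp) 1 + Finsupp.single (⟨y₂,hy₂⟩ : ↥Sp) 1).prod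
        fun c m => (c:S)^m) := by rw [hG]
    _ = q₂ * y₂ := aux_pair_prod (⟨q₂,hq₂⟩ : ↥Sp) ⟨y₂,hy₂⟩

set_option maxHeartbeats 1000000 in
/-- In an arithmetical semiring `(S, +, □, ∂)` (additive monoid free on the additive primes `Sp`,
multiplicative monoid of additive primes free on the multiplicative primes `Sq`, degree a
semiring homomorphism to `ℕ` with finite fibers, `∂⁻¹(0) = {0}` and `∂⁻¹(1) ∩ Sp = {1}`),
assumed monotonic, with `p` the
smallest integer such that `S□(p) ≠ 0`: for all sufficiently large `n`,
`S⁺(n) − S□(n) ≤ S□(p)·S(⌊n/p⌋) + S(⌊n/(p+1)⌋ + p + 1)`.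
(Stated additively to avoid truncated subtraction.) -/
theorem stmt_10 {S : Type*} [CommSemiring S]
    (Sp Sq : Set S) (deg : S → ℕ)
    (hdeg_zero : deg 0 = 0) (hdeg_one : deg 1 = 1)
    (hdeg_add : ∀ x y : S, deg (x + y) = deg x + deg y)
    (hdeg_mul : ∀ x y : S, deg (x * y) = deg x * deg y)
    (hfiber0 : ∀ x : S, deg x = 0 ↔ x = 0)
    (hfib : ∀ n : ℕ, {x : S | deg x = n}.Finite)
    (hadd_free : ∀ x : S, ∃! f : Sp →₀ ℕ, x = f.sum fun p n => n • (p : S))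
    (hSqSp : Sq ⊆ Sp)
    (hone_mem : (1 : S) ∈ Sp)
    (hmul_mem : ∀ x ∈ Sp, ∀ y ∈ Sp, x * y ∈ Sp)
    (hmul_free : ∀ x ∈ Sp, ∃! f : Sq →₀ ℕ, x = f.prod fun q n => (q : S) ^ n)
    (hfiber1 : ∀ x ∈ Sp, (deg x = 1 ↔ x = 1))
    (hmono : ∃ N : ℕ, ∀ n ≥ N, cntIn deg Sp n ≤ cntIn deg Sp (n + 1))
    (p : ℕ) (hp : cntIn deg Sq p ≠ 0) (hpmin : ∀ m < p, cntIn deg Sq m = 0) :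
    ∃ N : ℕ, ∀ n ≥ N,
      cntIn deg Sp n ≤
        cntIn deg Sq n + cntIn deg Sq p * cntAll deg (n / p) +
          cntAll deg (n / (p + 1) + p + 1) := by
  classical
  have hfinP : ∀ (m : ℕ) (P : Set S), {x : S | deg x = m ∧ x ∈ P}.Finite :=
    fun m P => (hfib m).subset (fun x hx => hx.1)
  -- every multiplicative prime has degree at least p
  have hq_ge : ∀ q : S, q ∈ Sq → p ≤ deg q := by
    intro q hq
    by_contra hlt
    push_neg at hlt
    have h0 := hpmin (deg q) hlt
    unfold cntIn at h0
    haveI : Finite {x : S // deg x = deg q ∧ x ∈ Sq} := (hfinP (deg q) Sq).to_subtype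
    have hne : Nonempty {x : S // deg x = deg q ∧ x ∈ Sq} := ⟨⟨q, rfl, hq⟩⟩
    exact (Nat.card_ne_zero.mpr ⟨hne, inferInstance⟩) h0
  -- p ≥ 1
  have hp1 : 1 ≤ p := by
    by_contra h
    have hp0 : p = 0 := by omega
    subst hp0
    unfold cntIn at hp
    haveI : Finite {x : S // deg x = 0 ∧ x ∈ Sq} := (hfinP 0 Sq).to_subtype
    obtain ⟨⟨q0, hq0d, hq0⟩⟩ := (Nat.card_ne_zero.mp hp).1
    have hq00 : q0 = 0 := (hfiber0 q0).mp hq0d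
    obtain ⟨f, hf, hfu⟩ := hmul_free q0 (hSqSp hq0)
    have h1 : Finsupp.single (⟨q0, hq0⟩ : ↥Sq) 1 = f := hfu _ (by
      show q0 = _
      rw [Finsupp.prod_single_index (h := fun (r : ↥Sq) n => (r:S)^n) (pow_zero _), pow_one])
    have h2 : Finsupp.single (⟨q0, hq0⟩ : ↥Sq) 2 = f := hfu _ (by
      show q0 = _
      rw [Finsupp.prod_single_index (h := fun (r : ↥Sq) n => (r:S)^n) (pow_zero _)]
      show q0 = q0 ^ 2
      rw [hq00]
      exact (zero_pow (by norm_num)).symm)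
    have h3 := DFunLike.congr_fun (h1.trans h2.symm) ⟨q0, hq0⟩
    simp [Finsupp.single_eq_same] at h3
  have hsmul : ∀ k : ℕ, deg (k • (1:S)) = k := by
    intro k
    induction k with
    | zero => rw [zero_smul, hdeg_zero]
    | succ m ih => rw [succ_nsmul, hdeg_add, ih, hdeg_one]
  refine ⟨2, fun n hn => ?_⟩
  set T := n / (p + 1) + p + 1 with hT
  set A : Set S := {x | deg x = n ∧ x ∈ Sp} with hA
  set A₀ : Set S := {x | deg x = n ∧ x ∈ Sq} with hA₀
  set A₁ : Set S := {x | deg x = n ∧ ∃ q y : S, q ∈ Sq ∧ deg q = p ∧ x = q * y} with hA₁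
  set A₂ : Set S := {x | (deg x = n ∧ x ∈ Sp) ∧ x ∉ Sq ∧
      ¬∃ q y : S, q ∈ Sq ∧ deg q = p ∧ x = q * y} with hA₂
  have hsub : A ⊆ (A₀ ∪ A₁) ∪ A₂ := by
    intro x hx
    by_cases h0 : x ∈ Sq
    · exact Or.inl (Or.inl ⟨hx.1, h0⟩)
    by_cases h1 : ∃ q y : S, q ∈ Sq ∧ deg q = p ∧ x = q * y
    · exact Or.inl (Or.inr ⟨hx.1, h1⟩)
    · exact Or.inr ⟨hx, h0, h1⟩
  have hA₀f : A₀.Finite := (hfib n).subset (fun x hx => hx.1)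
  have hA₁f : A₁.Finite := (hfib n).subset (fun x hx => hx.1)
  have hA₂f : A₂.Finite := (hfib n).subset (fun x hx => hx.1.1)
  -- bucket 1
  have hb1 : A₁.ncard ≤ cntIn deg Sq p * cntAll deg (n / p) := by
    have hstep : ∀ x : ↥A₁, ∃ w : {q : S // deg q = p ∧ q ∈ Sq} × {y : S // deg y = n / p},
        (x : S) = ↑w.1 * ↑w.2 := by
      rintro ⟨x, hxn, q, y, hqSq, hqp, rfl⟩
      refine ⟨⟨⟨q, hqp, hqSq⟩, ⟨y, ?_⟩⟩, rfl⟩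
      have hn' : p * deg y = n := by rw [← hxn, hdeg_mul, hqp]
      rw [← hn', Nat.mul_div_cancel_left _ (by omega : 0 < p)]
    choose ψ hψ using hstep
    haveI : Finite {q : S // deg q = p ∧ q ∈ Sq} := (hfinP p Sq).to_subtype
    haveI : Finite {y : S // deg y = n / p} := (hfib (n/p)).to_subtype
    have hcard : Nat.card ↥A₁ ≤
        Nat.card ({q : S // deg q = p ∧ q ∈ Sq} × {y : S // deg y = n / p}) := by
      apply Nat.card_le_card_of_injective ψ
      intro x₁ x₂ hx
      apply Subtype.ext
      rw [hψ x₁, hψ x₂, hx]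
    rw [Nat.card_prod] at hcard
    rw [← Nat.card_coe_set_eq]
    exact hcard
  -- bucket 2
  have hb2 : A₂.ncard ≤ cntAll deg T := by
    have hstep : ∀ x : ↥A₂, ∃ z : {z : S // deg z = T}, ∃ q y : S, ∃ k : ℕ,
        q ∈ Sp ∧ q ≠ 1 ∧ y ∈ Sp ∧ y ≠ 1 ∧ (x:S) = q * y ∧ (z:S) = q + y + k • 1 := by
      rintro ⟨x, ⟨hxn, hxSp⟩, hxq, hnop⟩
      obtain ⟨f, hxf, -⟩ := hmul_free x hxSp
      have hx1 : x ≠ 1 := by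
        intro h; rw [h, hdeg_one] at hxn; omega
      have hf0 : f ≠ 0 := by
        intro h; apply hx1; rw [hxf, h, Finsupp.prod_zero_index]
      obtain ⟨q, hqs⟩ := Finsupp.support_nonempty_iff.mpr hf0
      have hfq : f q ≠ 0 := Finsupp.mem_support_iff.mp hqs
      set f' := f - Finsupp.single q 1 with hf'def
      set y := f'.prod (fun r n => (r:S)^n) with hydef
      have hxqy : x = ↑q * y := by rw [hxf]; exact aux_extract f q hfq
      have hySp : y ∈ Sp := aux_prod_mem hSqSp hone_mem hmul_mem f'
      have hy1 : y ≠ 1 := by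
        intro h; apply hxq; rw [hxqy, h, mul_one]; exact q.2
      have hsup : ∀ r : ↥Sq, r ∈ f.support → p + 1 ≤ deg ↑r := by
        intro r hr
        have h1 : p ≤ deg (r:S) := hq_ge _ r.2
        have h2 : deg (r:S) ≠ p := by
          intro hdp
          exact hnop ⟨↑r, (f - Finsupp.single r 1).prod (fun s m => (s:S)^m), r.2, hdp,
            by rw [hxf]; exact aux_extract f r (Finsupp.mem_support_iff.mp hr)⟩
        omega
      have hdq : p + 1 ≤ deg (q:S) := hsup q hqs
      have hqne1 : (q:S) ≠ 1 := by
        intro h; rw [h, hdeg_one] at hdq; omega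
      have hf'0 : f' ≠ 0 := by
        intro h; apply hy1; rw [hydef, h, Finsupp.prod_zero_index]
      obtain ⟨r, hrs⟩ := Finsupp.support_nonempty_iff.mpr hf'0
      have hrf : r ∈ f.support := by
        rw [Finsupp.mem_support_iff] at hrs ⊢
        intro h
        apply hrs
        rw [hf'def, Finsupp.tsub_apply, h]
        exact Nat.zero_sub _
      have hyrw : y = ↑r * (f' - Finsupp.single r 1).prod (fun s m => (s:S)^m) :=
        aux_extract f' r (Finsupp.mem_support_iff.mp hrs)
      have hw : deg ((f' - Finsupp.single r 1).prod (fun s m => (s:S)^m)) ≠ 0 := by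
        intro h
        have hw0 := (hfiber0 _).mp h
        rw [hw0, mul_zero] at hyrw
        rw [hyrw, mul_zero] at hxqy
        rw [hxqy, hdeg_zero] at hxn
        omega
      have hdy : p + 1 ≤ deg y := by
        calc p + 1 ≤ deg (r:S) := hsup r hrf
          _ ≤ deg (r:S) * deg ((f' - Finsupp.single r 1).prod (fun s m => (s:S)^m)) :=
            Nat.le_mul_of_pos_right _ (Nat.pos_of_ne_zero hw)
          _ = deg y := by rw [hyrw, hdeg_mul]
      have hab : deg (q:S) * deg y = n := by rw [← hxn, hxqy, hdeg_mul]
      set a := deg (q:S) with hadef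
      set b := deg y with hbdef
      have harith : a + b ≤ n / (p+1) + (p+1) := by
        have key : (p+1) * (a+b) ≤ a*b + (p+1)*(p+1) := by nlinarith
        have h2 : a + b - (p+1) ≤ n / (p+1) := by
          rw [Nat.le_div_iff_mul_le (by omega : 0 < p+1), Nat.sub_mul, ← hab,
            Nat.sub_le_iff_le_add]
          calc (a+b)*(p+1) = (p+1)*(a+b) := mul_comm _ _
            _ ≤ a*b + (p+1)*(p+1) := key
        omega
      set k := n / (p+1) + (p+1) - (a+b) with hkdef
      refine ⟨⟨(q:S) + y + k • 1, ?_⟩, ↑q, y, k, hSqSp q.2, hqne1, hySp, hy1, hxqy, rfl⟩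
      rw [hdeg_add, hdeg_add, hsmul k, ← hadef, ← hbdef, hT]
      omega
    choose ψ hψ using hstep
    haveI : Finite {z : S // deg z = T} := (hfib T).to_subtype
    have hcard : Nat.card ↥A₂ ≤ Nat.card {z : S // deg z = T} := by
      apply Nat.card_le_card_of_injective ψ
      intro x₁ x₂ hx
      obtain ⟨q₁, y₁, k₁, hq₁Sp, hq₁1, hy₁Sp, hy₁1, hxy₁, hz₁⟩ := hψ x₁
      obtain ⟨q₂, y₂, k₂, hq₂Sp, hq₂1, hy₂Sp, hy₂1, hxy₂, hz₂⟩ := hψ x₂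
      apply Subtype.ext
      rw [hxy₁, hxy₂]
      apply aux_recover hadd_free hone_mem hq₁Sp hq₁1 hy₁Sp hy₁1 hq₂Sp hq₂1 hy₂Sp hy₂1
      rw [← hz₁, ← hz₂, hx]
    rw [← Nat.card_coe_set_eq]
    exact hcard
  have hA0eq : A₀.ncard = cntIn deg Sq n := (Nat.card_coe_set_eq A₀)
  calc cntIn deg Sp n = Nat.card ↥A := rfl
    _ = A.ncard := Nat.card_coe_set_eq A
    _ ≤ ((A₀ ∪ A₁) ∪ A₂).ncard := Set.ncard_le_ncard hsub ((hA₀f.union hA₁f).union hA₂f)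
    _ ≤ (A₀ ∪ A₁).ncard + A₂.ncard := Set.ncard_union_le _ _
    _ ≤ A₀.ncard + A₁.ncard + A₂.ncard :=
        add_le_add_left (Set.ncard_union_le _ _) _
    _ ≤ cntIn deg Sq n + cntIn deg Sq p * cntAll deg (n / p) + cntAll deg T := by
        rw [hA0eq] at *
        exact add_le_add (add_le_add le_rfl hb1) hb2
    _ = _ := rfl
end
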